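/- Define an equivalence relation on finite multisets of cut points on the edges of a fixed 4-valent graph (a virtual link diagram D) generated by three moves: (I) insert or delete two adjacent cut points on the same edge, (II) cancel two cut points lying on adjacent edges across a virtual crossing (i.e., remove a pair of points separated only by a virtual crossing), and (III) simultaneously toggle one cut point on each of the four edges incident to a fixed classical crossing. Then any two cut systems of D (sets of points admitting an alternate orientation) are related by a finite sequence of these moves. -/

import Mathlib

/-- A combinatorial model of a virtual link diagram.  `S` is the (finite) set of
edges (segments between consecutive crossing passages), `next` is the traversal
successor along the underlying immersed curves, and the gap following an edge `s`
is either a classical crossing passage (`classicalGap s`) or a virtual crossing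
passage (`virtualGap s`).  Classical crossings form a type `C`; crossing `c` is
passed twice, just after the edges `passes c 0` and `passes c 1`, so the four
edges incident to `c` are `passes c k` and `next (passes c k)` for `k = 0, 1`. -/
structure VDiagram where
  S : Type
  finS : Fintype S
  deceqS : DecidableEq S
  next : S ≃ S
  classicalGap : S → Bool
  virtualGap : S → Bool
  C : Type
  passes : C → Fin 2 → S
  passes_classical : ∀ c k, classicalGap (passes c k) = true
  classical_covered : ∀ s, classicalGap s = true → ∃ c k, passes c k = s
  passes_inj : Function.Injective (fun p : C × Fin 2 => passes p.1 p.2)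
  gaps_disjoint : ∀ s, ¬(classicalGap s = true ∧ virtualGap s = true)
  gaps_total : ∀ s, classicalGap s = true ∨ virtualGap s = true

/-- A cut system: a finite multiset of cut points on the edges of `D` admitting an
alternate orientation.  `o s` records (in `ZMod 2`) whether the alternate
orientation agrees with the traversal direction at the start of edge `s`; the
orientation reverses at each cut point and at each classical crossing, and at a
classical crossing the four incident edge-directions alternate in/out, i.e. the
two incoming strands carry opposite orientation values. -/
def IsCutSystem (D : VDiagram) (P : Multiset D.S) : Prop :=
  letI := D.deceqS
  ∃ o : D.S → ZMod 2,
    (∀ s, o (D.next s) = o s + (P.count s : ZMod 2)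
        + (if D.classicalGap s then 1 else 0)) ∧
    (∀ c : D.C,
      (o (D.passes c 0) + (P.count (D.passes c 0) : ZMod 2))
        + (o (D.passes c 1) + (P.count (D.passes c 1) : ZMod 2)) = 1)

/-- Dye's cut point moves.  Move I inserts or deletes a pair of adjacent cut
points on one edge.  Move II cancels a pair of cut points adjacent across a
virtual crossing.  Move III simultaneously toggles one cut point on each of the
four edges incident to a classical crossing. -/
def CutMove (D : VDiagram) (P P' : Multiset D.S) : Prop :=
  (∃ s : D.S, P' = s ::ₘ s ::ₘ P ∨ P = s ::ₘ s ::ₘ P') ∨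
  (∃ s : D.S, D.virtualGap s = true ∧
      (P' = s ::ₘ D.next s ::ₘ P ∨ P = s ::ₘ D.next s ::ₘ P')) ∨
  (∃ c : D.C,
      P' = D.passes c 0 ::ₘ D.next (D.passes c 0) ::ₘ
             D.passes c 1 ::ₘ D.next (D.passes c 1) ::ₘ P ∨
      P = D.passes c 0 ::ₘ D.next (D.passes c 0) ::ₘ
             D.passes c 1 ::ₘ D.next (D.passes c 1) ::ₘ P')

namespace CutAux

variable (D : VDiagram)

instance : Fintype D.S := D.finS
instance : DecidableEq D.S := D.deceqS

abbrev R (P P' : Multiset D.S) : Prop := Relation.ReflTransGen (CutMove D) P P'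

lemma cutMove_symm : Symmetric (CutMove D) := by
  rintro P Q (⟨s, h | h⟩ | ⟨s, hv, h | h⟩ | ⟨c, h | h⟩)
  · exact Or.inl ⟨s, Or.inr h⟩
  · exact Or.inl ⟨s, Or.inl h⟩
  · exact Or.inr (Or.inl ⟨s, hv, Or.inr h⟩)
  · exact Or.inr (Or.inl ⟨s, hv, Or.inl h⟩)
  · exact Or.inr (Or.inr ⟨c, Or.inr h⟩)
  · exact Or.inr (Or.inr ⟨c, Or.inl h⟩)

lemma R_symm {P Q : Multiset D.S} (h : R D P Q) : R D Q P :=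
  by
    induction h with
    | refl => exact Relation.ReflTransGen.refl
    | tail _ hab ih => exact ih.head (cutMove_symm D hab)

def toMul (n : D.S → ℕ) : Multiset D.S :=
  Finset.univ.val.bind fun s => Multiset.replicate (n s) s

lemma count_toMul (n : D.S → ℕ) (t : D.S) : (toMul D n).count t = n t := by
  rw [toMul, Multiset.count_bind]
  simp [Multiset.count_replicate]

def toM (f : D.S → ZMod 2) : Multiset D.S := toMul D fun s => (f s).val

lemma cast_count_toM (f : D.S → ZMod 2) (t : D.S) :
    ((toM D f).count t : ZMod 2) = f t := by
  rw [toM, count_toMul]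
  simp [ZMod.natCast_val, ZMod.cast_id]

lemma addPairs (A P : Multiset D.S) : R D P (A + A + P) := by
  induction A using Multiset.induction with
  | empty => simpa using Relation.ReflTransGen.refl
  | cons a A ih =>
      have he : (a ::ₘ A) + (a ::ₘ A) + P = a ::ₘ a ::ₘ (A + A + P) := by
        simp only [← Multiset.singleton_add]; abel
      rw [he]
      exact ih.tail (Or.inl ⟨a, Or.inl rfl⟩)

lemma parityEq (P Q : Multiset D.S)
    (h : ∀ s, ((P.count s : ZMod 2)) = (Q.count s : ZMod 2)) : R D P Q := by
  have hm : ∀ s, P.count s % 2 = Q.count s % 2 := fun s =>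
    (ZMod.natCast_eq_natCast_iff _ _ _).1 (h s)
  set A := toMul D (fun s => (Q.count s - P.count s) / 2) with hA
  set B := toMul D (fun s => (P.count s - Q.count s) / 2) with hB
  have hE : A + A + P = B + B + Q := by
    ext t
    simp only [Multiset.count_add, hA, hB, count_toMul]
    have := hm t
    omega
  exact (addPairs D A P).trans (hE ▸ (R_symm D (addPairs D B Q)))

lemma one_of_ne_zero : ∀ a : ZMod 2, a ≠ 0 → a = 1 := by decide

lemma passes_inj' (D : VDiagram) {c c' : D.C} {k k' : Fin 2}
    (h : D.passes c k = D.passes c' k') : c = c' ∧ k = k' := by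
  have := @D.passes_inj (c, k) (c', k') h
  exact ⟨congrArg Prod.fst this, congrArg Prod.snd this⟩

lemma mainLemma : ∀ n (g : D.S → ZMod 2),
    (Finset.univ.filter fun s => g s = 1).card ≤ n →
    (∀ c, g (D.next (D.passes c 0)) = g (D.next (D.passes c 1))) →
    ∀ f : D.S → ZMod 2,
      R D (toM D f) (toM D fun u => f u + g (D.next u) + g u) := by
  intro n
  induction n with
  | zero =>
      intro g hcard _ f
      have hg : ∀ u, g u = 0 := by
        intro u
        by_contra hu
        have : u ∈ Finset.univ.filter fun s => g s = 1 := by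
          simp [one_of_ne_zero _ hu]
        have := Finset.card_pos.2 ⟨u, this⟩
        omega
      have : (fun u => f u + g (D.next u) + g u) = f := by
        funext u; simp [hg]
      rw [this]
  | succ n ih =>
      intro g hcard hcross f
      by_cases hg0 : ∀ u, g u = 0
      · have : (fun u => f u + g (D.next u) + g u) = f := by
          funext u; simp [hg0]
        rw [this]
      push_neg at hg0
      obtain ⟨t, ht⟩ := hg0
      have hgt : g t = 1 := one_of_ne_zero _ ht
      set s := D.next.symm t with hs
      have hst : D.next s = t := D.next.apply_symm_apply t
      rcases D.gaps_total s with hc | hv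
      · -- classical case
        obtain ⟨c, k, hck⟩ := D.classical_covered s hc
        set p0 := D.passes c 0 with hp0
        set p1 := D.passes c 1 with hp1
        set t0 := D.next p0 with ht0
        set t1 := D.next p1 with ht1
        have hp01 : p0 ≠ p1 := by
          intro h
          have := (passes_inj' D h).2
          simp at this
        have ht01 : t0 ≠ t1 := fun h => hp01 (D.next.injective h)
        have hgt01 : g t0 = 1 ∧ g t1 = 1 := by
          have hk2 : k = 0 ∨ k = 1 := by fin_cases k <;> simp
          have hk : t = t0 ∨ t = t1 := by
            rcases hk2 with h | h <;> subst h
            · left; rw [← hst, ht0, hp0, hck]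
            · right; rw [← hst, ht1, hp1, hck]
          have hc0 := hcross c
          rcases hk with h | h
          · exact ⟨h ▸ hgt, by rw [← hc0, ← ht0]; exact h ▸ hgt⟩
          · exact ⟨by rw [hc0, ← ht1]; exact h ▸ hgt, h ▸ hgt⟩
        set g' : D.S → ZMod 2 :=
          Function.update (Function.update g t0 0) t1 0 with hg'def
        have hg' : ∀ x, g' x = g x + (if x = t0 then 1 else 0)
            + (if x = t1 then 1 else 0) := by
          intro x
          by_cases h0 : x = t0
          · subst h0
            simp only [hg'def, Function.update_apply, if_neg ht01, if_pos rfl,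
              if_neg (Ne.symm ht01), hgt01.1]
            decide
          · by_cases h1 : x = t1
            · subst h1
              simp only [hg'def, Function.update_apply, if_pos rfl, if_neg h0, hgt01.2]
              decide
            · simp [hg'def, Function.update_apply, h0, h1]
        have key : ∀ c' k', D.next (D.passes c' k') = t0 ∨
            D.next (D.passes c' k') = t1 → c' = c := by
          intro c' k' h
          rcases h with h | h
          · exact (passes_inj' D (D.next.injective h)).1
          · exact (passes_inj' D (D.next.injective h)).1
        have hcross' : ∀ c', g' (D.next (D.passes c' 0)) = g' (D.next (D.passes c' 1)) := by
          intro c'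
          by_cases hcc : c' = c
          · subst hcc
            have a0 : g' t0 = 0 := by
              rw [hg'def, Function.update_of_ne ht01, Function.update_self]
            have a1 : g' t1 = 0 := by
              rw [hg'def, Function.update_self]
            show g' t0 = g' t1
            rw [a0, a1]
          · have h0 : D.next (D.passes c' 0) ≠ t0 ∧ D.next (D.passes c' 0) ≠ t1 := by
              constructor <;> intro h <;> exact hcc (key c' 0 (by tauto))
            have h1 : D.next (D.passes c' 1) ≠ t0 ∧ D.next (D.passes c' 1) ≠ t1 := by
              constructor <;> intro h <;> exact hcc (key c' 1 (by tauto))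
            rw [hg' _, hg' _, if_neg h0.1, if_neg h0.2, if_neg h1.1, if_neg h1.2]
            rw [hcross c']
        have hsub : (Finset.univ.filter fun x => g' x = 1) ⊆
            (Finset.univ.filter fun x => g x = 1).erase t0 := by
          intro x hx
          simp only [Finset.mem_filter, Finset.mem_univ, true_and] at hx
          have hx0 : x ≠ t0 := by
            intro h; subst h
            simp [hg'def, Function.update_apply, ht01] at hx
          have hx1 : x ≠ t1 := by
            intro h; subst h
            simp [hg'def, Function.update_apply] at hx
          rw [Finset.mem_erase]
          refine ⟨hx0, ?_⟩
          simp only [Finset.mem_filter, Finset.mem_univ, true_and]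
          rw [hg' x, if_neg hx0, if_neg hx1] at hx
          simpa using hx
        have hcard' : (Finset.univ.filter fun x => g' x = 1).card ≤ n := by
          have h1 := Finset.card_le_card hsub
          have h2 : t0 ∈ Finset.univ.filter fun x => g x = 1 := by
            simp [hgt01.1]
          rw [Finset.card_erase_of_mem h2] at h1
          have h3 := Finset.card_pos.2 ⟨t0, h2⟩
          omega
        have hIH := ih g' hcard' hcross' f
        refine hIH.trans ?_
        set Q := toM D (fun u => f u + g' (D.next u) + g' u) with hQ
        have m1 : CutMove D Q (p0 ::ₘ t0 ::ₘ p1 ::ₘ t1 ::ₘ Q) :=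
          Or.inr (Or.inr ⟨c, Or.inl rfl⟩)
        refine (Relation.ReflTransGen.single m1).trans ?_
        apply parityEq
        intro u
        have e0 : (D.next u = t0) = (u = p0) :=
          propext ⟨fun h => D.next.injective (h.trans ht0),
                   fun h => by rw [h, ht0]⟩
        have e1 : (D.next u = t1) = (u = p1) :=
          propext ⟨fun h => D.next.injective (h.trans ht1),
                   fun h => by rw [h, ht1]⟩
        simp only [Multiset.count_cons, hQ]
        push_cast
        rw [cast_count_toM, cast_count_toM, hg' (D.next u), hg' u]
        simp only [e0, e1]
        have h2 : (2 : ZMod 2) = 0 := rfl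
        ring_nf
        simp [h2]
      · -- virtual case
        set g' : D.S → ZMod 2 := Function.update g t 0 with hg'def
        have hg' : ∀ x, g' x = g x + (if x = t then 1 else 0) := by
          intro x
          by_cases h0 : x = t
          · subst h0
            simp only [hg'def, Function.update_self, if_pos rfl, hgt]
            decide
          · simp [hg'def, Function.update_apply, h0]
        have hcross' : ∀ c', g' (D.next (D.passes c' 0)) = g' (D.next (D.passes c' 1)) := by
          intro c'
          have key : ∀ k', D.next (D.passes c' k') ≠ t := by
            intro k' h
            have hsp : D.passes c' k' = s := D.next.injective (h.trans hst.symm)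
            exact D.gaps_disjoint s ⟨hsp ▸ D.passes_classical c' k', hv⟩
          rw [hg' _, hg' _, if_neg (key 0), if_neg (key 1), hcross c']
        have hsub : (Finset.univ.filter fun x => g' x = 1) ⊆
            (Finset.univ.filter fun x => g x = 1).erase t := by
          intro x hx
          simp only [Finset.mem_filter, Finset.mem_univ, true_and] at hx
          have hx0 : x ≠ t := by
            intro h; subst h; simp [hg'def] at hx
          rw [Finset.mem_erase]
          refine ⟨hx0, ?_⟩
          simp only [Finset.mem_filter, Finset.mem_univ, true_and]
          rw [hg' x, if_neg hx0] at hx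
          simpa using hx
        have hcard' : (Finset.univ.filter fun x => g' x = 1).card ≤ n := by
          have h1 := Finset.card_le_card hsub
          have h2 : t ∈ Finset.univ.filter fun x => g x = 1 := by simp [hgt]
          rw [Finset.card_erase_of_mem h2] at h1
          have h3 := Finset.card_pos.2 ⟨t, h2⟩
          omega
        have hIH := ih g' hcard' hcross' f
        refine hIH.trans ?_
        set Q := toM D (fun u => f u + g' (D.next u) + g' u) with hQ
        have hvs : D.virtualGap s = true := hv
        have m1 : CutMove D Q (s ::ₘ D.next s ::ₘ Q) :=
          Or.inr (Or.inl ⟨s, hvs, Or.inl rfl⟩)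
        refine (Relation.ReflTransGen.single m1).trans ?_
        apply parityEq
        intro u
        have e0 : (D.next u = t) = (u = s) :=
          propext ⟨fun h => D.next.injective (h.trans hst.symm),
                   fun h => by rw [h, hst]⟩
        have e1 : (u = D.next s) = (u = t) := by rw [hst]
        simp only [Multiset.count_cons, hQ]
        push_cast
        rw [cast_count_toM, cast_count_toM, hg' (D.next u), hg' u]
        simp only [e0, e1]
        have h2 : (2 : ZMod 2) = 0 := rfl
        ring_nf
        simp [h2]

end CutAux

/-- Any two cut systems of the same virtual link diagram are related by a finite
sequence of cut point moves I, II and III. -/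


theorem cutSystems_related_by_cutMoves (D : VDiagram) (P P' : Multiset D.S)
    (hP : IsCutSystem D P) (hP' : IsCutSystem D P') :
    Relation.ReflTransGen (CutMove D) P P' := by
  classical
  open CutAux in
  letI := D.deceqS
  obtain ⟨o, h1, h2⟩ := hP
  obtain ⟨o', h1', h2'⟩ := hP'
  set f : D.S → ZMod 2 := fun u => (P.count u : ZMod 2) with hf
  set f' : D.S → ZMod 2 := fun u => (P'.count u : ZMod 2) with hf'
  set g : D.S → ZMod 2 := fun u => o u + o' u with hg
  have hA : ∀ u, f' u = f u + g (D.next u) + g u := by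
    intro u
    show f' u = f u + (o (D.next u) + o' (D.next u)) + (o u + o' u)
    rw [h1 u, h1' u]
    show f' u = f u + ((o u + f u + _) + (o' u + f' u + _)) + (o u + o' u)
    have h2' : (2 : ZMod 2) = 0 := rfl
    ring_nf
    simp [h2']
  have hB : ∀ c, g (D.next (D.passes c 0)) = g (D.next (D.passes c 1)) := by
    intro c
    have e2 := h2 c
    have e2' := h2' c
    have q0 := h1 (D.passes c 0)
    have q1 := h1 (D.passes c 1)
    have q0' := h1' (D.passes c 0)
    have q1' := h1' (D.passes c 1)
    rw [D.passes_classical c 0, if_pos rfl] at q0 q0'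
    rw [D.passes_classical c 1, if_pos rfl] at q1 q1'
    show o (D.next (D.passes c 0)) + o' (D.next (D.passes c 0)) =
      o (D.next (D.passes c 1)) + o' (D.next (D.passes c 1))
    rw [q0, q1, q0', q1']
    revert e2 e2'
    generalize o (D.passes c 0) = a
    generalize o (D.passes c 1) = b
    generalize o' (D.passes c 0) = a'
    generalize o' (D.passes c 1) = b'
    generalize ((P.count (D.passes c 0) : ZMod 2)) = x
    generalize ((P.count (D.passes c 1) : ZMod 2)) = y
    generalize ((P'.count (D.passes c 0) : ZMod 2)) = x'
    generalize ((P'.count (D.passes c 1) : ZMod 2)) = y'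
    revert a b a' b' x y x' y'
    decide
  have step1 : Relation.ReflTransGen (CutMove D) P (toM D f) := by
    apply parityEq
    intro u
    rw [cast_count_toM]
  have step2 : Relation.ReflTransGen (CutMove D) (toM D f)
      (toM D fun u => f u + g (D.next u) + g u) :=
    mainLemma D _ g le_rfl hB f
  have step3 : (toM D fun u => f u + g (D.next u) + g u) = toM D f' := by
    congr 1
    funext u
    exact (hA u).symm
  have step4 : Relation.ReflTransGen (CutMove D) (toM D f') P' := by
    apply parityEq
    intro u
    rw [cast_count_toM]
  exact ((step1.trans step2).trans (step3 ▸ step4)).trans Relation.ReflTransGen.refl
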